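/- Fix z ∈ ℂ⁺, N ∈ ℕ with N ≥ 1, and real sequences α_k, β_k ≥ 1 for k = 1,…,N. Then there is at most one pair (u,v) ∈ ℂ⁺ × ℂ⁺ satisfying u = -(1/N) Σ_k α_k/(z + α_k u + β_k v) and v = -(1/N) Σ_k β_k/(z + α_k u + β_k v). -/

import Mathlib

open Complex Finset

lemma aux_im (z : ℂ) (hz : 0 < z.im) (N : ℕ) (hN : 1 ≤ N) (α β γ : Fin N → ℝ)
    (hα : ∀ k, 0 < α k) (hβ : ∀ k, 0 < β k) (hγ : ∀ k, 0 < γ k)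
    (u v w : ℂ) (hu : 0 < u.im) (hv : 0 < v.im)
    (h : w = -(1 / N) * ∑ k, (γ k : ℂ) / (z + α k * u + β k * v)) :
    (1 / N : ℝ) * ∑ k, γ k * (α k * u.im + β k * v.im)
      / Complex.normSq (z + α k * u + β k * v) < w.im := by
  have hNpos : (0:ℝ) < N := by exact_mod_cast hN
  set d : Fin N → ℂ := fun k => z + α k * u + β k * v with hd
  have hdim : ∀ k, (d k).im = z.im + α k * u.im + β k * v.im := by
    intro k; simp [hd]
  have hdpos : ∀ k, 0 < (d k).im := by
    intro k; rw [hdim k]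
    have := (hα k); have := (hβ k)
    positivity
  have hns : ∀ k, 0 < Complex.normSq (d k) := by
    intro k
    have : d k ≠ 0 := by
      intro h0
      simpa [h0] using (hdpos k).ne'
    exact Complex.normSq_pos.2 this
  have him : w.im = (1 / N : ℝ) * ∑ k, γ k * (d k).im / Complex.normSq (d k) := by
    conv_lhs => rw [h]
    rw [show -(1/(N:ℂ)) = ((-(1/N):ℝ):ℂ) by push_cast; ring]
    rw [Complex.im_ofReal_mul, Complex.im_sum]
    rw [show ∑ k, ((γ k : ℂ) / d k).im = ∑ k, (-(γ k * (d k).im / Complex.normSq (d k))) by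
      apply Finset.sum_congr rfl
      intro k _
      rw [div_eq_mul_inv, Complex.im_ofReal_mul, Complex.inv_im]
      ring]
    rw [Finset.sum_neg_distrib]
    ring
  rw [him]
  apply mul_lt_mul_of_pos_left _ (by positivity : (0:ℝ) < 1/N)
  apply Finset.sum_lt_sum
  · intro k _
    rw [hdim k]
    have h2 := hns k
    apply (div_le_div_iff_of_pos_right h2).2
    nlinarith [hγ k, hz]
  · refine ⟨⟨0, hN⟩, Finset.mem_univ _, ?_⟩
    set k : Fin N := ⟨0, hN⟩
    rw [hdim k]
    apply (div_lt_div_iff_of_pos_right (hns k)).2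
    nlinarith [hγ k, hz]

lemma aux_diff (z : ℂ) (N : ℕ) (α β γ : Fin N → ℝ) (u v u' v' w w' : ℂ)
    (hdne : ∀ k : Fin N, (z + α k * u + β k * v) ≠ 0)
    (hd'ne : ∀ k : Fin N, (z + α k * u' + β k * v') ≠ 0)
    (h : w = -(1 / N) * ∑ k, (γ k : ℂ) / (z + α k * u + β k * v))
    (h' : w' = -(1 / N) * ∑ k, (γ k : ℂ) / (z + α k * u' + β k * v')) :
    w - w' = (1 / N : ℂ) * ∑ k, (γ k : ℂ) * ((α k : ℂ) * (u - u') + (β k : ℂ) * (v - v'))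
      / ((z + α k * u + β k * v) * (z + α k * u' + β k * v')) := by
  rw [h, h']
  have : ∀ k : Fin N, (γ k : ℂ) / (z + α k * u' + β k * v') - (γ k : ℂ) / (z + α k * u + β k * v)
      = (γ k : ℂ) * ((α k : ℂ) * (u - u') + (β k : ℂ) * (v - v'))
      / ((z + α k * u + β k * v) * (z + α k * u' + β k * v')) := by
    intro k
    field_simp [hdne k, hd'ne k]
    ring
  rw [show (∑ k, (γ k : ℂ) * ((α k : ℂ) * (u - u') + (β k : ℂ) * (v - v'))
      / ((z + α k * u + β k * v) * (z + α k * u' + β k * v')))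
      = ∑ k, ((γ k : ℂ) / (z + α k * u' + β k * v') - (γ k : ℂ) / (z + α k * u + β k * v)) from
    Finset.sum_congr rfl fun k _ => (this k).symm]
  rw [Finset.sum_sub_distrib]
  ring

lemma aux_cs1 (A B C a b p q p' q' r : ℝ) (hA : 0 < A) (hB : 0 < B) (hC : 0 < C)
    (hp : 0 < p) (hq : 0 < q) (hp' : 0 < p') (hq' : 0 < q') (hr : 0 ≤ r)
    (ha : a ≤ r * Real.sqrt (p * p')) (hb : b ≤ r * Real.sqrt (q * q')) :
    C * (A * a + B * b) ≤
      r * (Real.sqrt (C * (A * p + B * q)) * Real.sqrt (C * (A * p' + B * q'))) := by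
  have hmix : Real.sqrt (p * p') * Real.sqrt (q * q')
      = Real.sqrt (p * q') * Real.sqrt (p' * q) := by
    rw [← Real.sqrt_mul (by positivity), ← Real.sqrt_mul (by positivity)]
    congr 1; ring
  have e1 : Real.sqrt (p * p') ^ 2 = p * p' := Real.sq_sqrt (by positivity)
  have e2 : Real.sqrt (q * q') ^ 2 = q * q' := Real.sq_sqrt (by positivity)
  have e3 : Real.sqrt (p * q') ^ 2 = p * q' := Real.sq_sqrt (by positivity)
  have e4 : Real.sqrt (p' * q) ^ 2 = p' * q := Real.sq_sqrt (by positivity)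
  have hst : 2 * (Real.sqrt (p * p') * Real.sqrt (q * q')) ≤ p * q' + p' * q := by
    rw [hmix]
    nlinarith [sq_nonneg (Real.sqrt (p * q') - Real.sqrt (p' * q)), e3, e4]
  have h2 : A * Real.sqrt (p * p') + B * Real.sqrt (q * q')
      ≤ Real.sqrt ((A * p + B * q) * (A * p' + B * q')) := by
    rw [Real.le_sqrt (by positivity) (by positivity)]
    have g1 : A ^ 2 * Real.sqrt (p * p') ^ 2 = A ^ 2 * (p * p') := by rw [e1]
    have g2 : B ^ 2 * Real.sqrt (q * q') ^ 2 = B ^ 2 * (q * q') := by rw [e2]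
    nlinarith [mul_le_mul_of_nonneg_left hst (mul_pos hA hB).le, g1, g2]
  have h3 : Real.sqrt (C * (A * p + B * q)) * Real.sqrt (C * (A * p' + B * q'))
      = C * Real.sqrt ((A * p + B * q) * (A * p' + B * q')) := by
    rw [← Real.sqrt_mul (by positivity),
      show C * (A * p + B * q) * (C * (A * p' + B * q'))
        = C ^ 2 * ((A * p + B * q) * (A * p' + B * q')) by ring,
      Real.sqrt_mul (by positivity), Real.sqrt_sq hC.le]
  rw [h3]
  have h4 : A * a + B * b ≤ r * Real.sqrt ((A * p + B * q) * (A * p' + B * q')) := by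
    calc A * a + B * b ≤ r * (A * Real.sqrt (p * p') + B * Real.sqrt (q * q')) := by nlinarith
    _ ≤ r * Real.sqrt ((A * p + B * q) * (A * p' + B * q')) :=
        mul_le_mul_of_nonneg_left h2 hr
  calc C * (A * a + B * b) ≤ C * (r * Real.sqrt ((A * p + B * q) * (A * p' + B * q'))) :=
        mul_le_mul_of_nonneg_left h4 hC.le
  _ = r * (C * Real.sqrt ((A * p + B * q) * (A * p' + B * q'))) := by ring

lemma aux_chain (N : ℕ) (α β γ : Fin N → ℝ)
    (hα : ∀ k, 0 < α k) (hβ : ∀ k, 0 < β k) (hγ : ∀ k, 0 < γ k)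
    (D D' : Fin N → ℝ) (hD : ∀ k, 0 < D k) (hD' : ∀ k, 0 < D' k)
    (a b p q p' q' r : ℝ) (hp : 0 < p) (hq : 0 < q) (hp' : 0 < p') (hq' : 0 < q')
    (hr : 0 ≤ r) (ha : a ≤ r * Real.sqrt (p * p')) (hb : b ≤ r * Real.sqrt (q * q')) :
    (1 / N : ℝ) * ∑ k, γ k * (α k * a + β k * b) / (D k * D' k)
      ≤ r * Real.sqrt (((1 / N : ℝ) * ∑ k, γ k * (α k * p + β k * q) / (D k) ^ 2)
          * ((1 / N : ℝ) * ∑ k, γ k * (α k * p' + β k * q') / (D' k) ^ 2)) := by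
  set F : Fin N → ℝ := fun k => γ k * (α k * p + β k * q) / (D k) ^ 2 with hF
  set G : Fin N → ℝ := fun k => γ k * (α k * p' + β k * q') / (D' k) ^ 2 with hG
  have hFnn : ∀ k, 0 ≤ F k := by
    intro k
    show (0:ℝ) ≤ γ k * (α k * p + β k * q) / (D k) ^ 2
    have := (hα k).le; have := (hβ k).le; have := (hγ k).le; have := (hD k)
    positivity
  have hGnn : ∀ k, 0 ≤ G k := by
    intro k
    show (0:ℝ) ≤ γ k * (α k * p' + β k * q') / (D' k) ^ 2
    have := (hα k).le; have := (hβ k).le; have := (hγ k).le; have := (hD' k)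
    positivity
  have perk : ∀ k : Fin N, γ k * (α k * a + β k * b) / (D k * D' k)
      ≤ r * (Real.sqrt (F k) * Real.sqrt (G k)) := by
    intro k
    have hX : (0:ℝ) ≤ γ k * (α k * p + β k * q) :=
      mul_nonneg (hγ k).le (add_nonneg (mul_nonneg (hα k).le hp.le) (mul_nonneg (hβ k).le hq.le))
    have hY : (0:ℝ) ≤ γ k * (α k * p' + β k * q') :=
      mul_nonneg (hγ k).le (add_nonneg (mul_nonneg (hα k).le hp'.le) (mul_nonneg (hβ k).le hq'.le))
    have eF : Real.sqrt (F k) = Real.sqrt (γ k * (α k * p + β k * q)) / D k := by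
      show Real.sqrt (γ k * (α k * p + β k * q) / (D k) ^ 2) = _
      rw [Real.sqrt_div hX,
        Real.sqrt_sq (hD k).le]
    have eG : Real.sqrt (G k) = Real.sqrt (γ k * (α k * p' + β k * q')) / D' k := by
      show Real.sqrt (γ k * (α k * p' + β k * q') / (D' k) ^ 2) = _
      rw [Real.sqrt_div hY,
        Real.sqrt_sq (hD' k).le]
    rw [eF, eG, show r * (Real.sqrt (γ k * (α k * p + β k * q)) / D k
        * (Real.sqrt (γ k * (α k * p' + β k * q')) / D' k))
      = (r * (Real.sqrt (γ k * (α k * p + β k * q))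
        * Real.sqrt (γ k * (α k * p' + β k * q')))) / (D k * D' k) by ring]
    apply div_le_div_of_nonneg_right ?_ (mul_pos (hD k) (hD' k)).le |>.trans_eq rfl
    case _ =>
      exact aux_cs1 (α k) (β k) (γ k) a b p q p' q' r (hα k) (hβ k) (hγ k)
        hp hq hp' hq' hr ha hb
  have hsum : ∑ k, γ k * (α k * a + β k * b) / (D k * D' k)
      ≤ r * (Real.sqrt (∑ k, F k) * Real.sqrt (∑ k, G k)) := by
    calc ∑ k, γ k * (α k * a + β k * b) / (D k * D' k)
        ≤ ∑ k, r * (Real.sqrt (F k) * Real.sqrt (G k)) :=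
          Finset.sum_le_sum fun k _ => perk k
      _ = r * ∑ k, Real.sqrt (F k) * Real.sqrt (G k) := by rw [Finset.mul_sum]
      _ ≤ r * (Real.sqrt (∑ k, F k) * Real.sqrt (∑ k, G k)) :=
          mul_le_mul_of_nonneg_left
            (Real.sum_sqrt_mul_sqrt_le _ (fun k => hFnn k) (fun k => hGnn k)) hr
  have hFs : (0:ℝ) ≤ ∑ k, F k := Finset.sum_nonneg fun k _ => hFnn k
  have hGs : (0:ℝ) ≤ ∑ k, G k := Finset.sum_nonneg fun k _ => hGnn k
  have hNnn : (0:ℝ) ≤ 1 / N := by positivity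
  have hsplit : Real.sqrt (((1 / N : ℝ) * ∑ k, F k) * ((1 / N : ℝ) * ∑ k, G k))
      = (1 / N : ℝ) * (Real.sqrt (∑ k, F k) * Real.sqrt (∑ k, G k)) := by
    rw [Real.sqrt_mul (by positivity), Real.sqrt_mul hNnn, Real.sqrt_mul hNnn,
      show Real.sqrt (1/N) * Real.sqrt (∑ k, F k) * (Real.sqrt (1/N) * Real.sqrt (∑ k, G k))
        = (Real.sqrt (1/N) * Real.sqrt (1/N)) * (Real.sqrt (∑ k, F k) * Real.sqrt (∑ k, G k))
        by ring,
      Real.mul_self_sqrt hNnn]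
  rw [hsplit]
  calc (1 / N : ℝ) * ∑ k, γ k * (α k * a + β k * b) / (D k * D' k)
      ≤ (1 / N : ℝ) * (r * (Real.sqrt (∑ k, F k) * Real.sqrt (∑ k, G k))) :=
        mul_le_mul_of_nonneg_left hsum hNnn
    _ = r * ((1 / N : ℝ) * (Real.sqrt (∑ k, F k) * Real.sqrt (∑ k, G k))) := by ring

lemma aux_abs (N : ℕ) (α β γ : Fin N → ℝ)
    (hα : ∀ k, 0 ≤ α k) (hβ : ∀ k, 0 ≤ β k) (hγ : ∀ k, 0 ≤ γ k)
    (u v u' v' w w' : ℂ) (d d' : Fin N → ℂ)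
    (hdiff : w - w' = (1 / N : ℂ) * ∑ k, (γ k : ℂ)
      * ((α k : ℂ) * (u - u') + (β k : ℂ) * (v - v')) / (d k * d' k)) :
    ‖w - w'‖ ≤ (1 / N : ℝ) * ∑ k, γ k
      * (α k * ‖u - u'‖ + β k * ‖v - v'‖)
      / (‖d k‖ * ‖d' k‖) := by
  rw [hdiff, norm_mul]
  have h1 : ‖(1:ℂ)/N‖ = 1/(N:ℝ) := by
    rw [norm_div, norm_one, Complex.norm_natCast]
  rw [h1]
  apply mul_le_mul_of_nonneg_left ?_ (by positivity)
  calc ‖∑ k, (γ k : ℂ) * ((α k : ℂ) * (u - u') + (β k : ℂ) * (v - v'))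
        / (d k * d' k)‖
      ≤ ∑ k, ‖(γ k : ℂ) * ((α k : ℂ) * (u - u') + (β k : ℂ) * (v - v'))
        / (d k * d' k)‖ := norm_sum_le _ _
    _ ≤ ∑ k, γ k * (α k * ‖u - u'‖ + β k * ‖v - v'‖)
        / (‖d k‖ * ‖d' k‖) := by
      apply Finset.sum_le_sum
      intro k _
      rw [norm_div, norm_mul, norm_mul, Complex.norm_of_nonneg (hγ k)]
      apply div_le_div_of_nonneg_right ?_ (by positivity) |>.trans_eq rfl
      case _ =>
        apply mul_le_mul_of_nonneg_left ?_ (hγ k)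
        calc ‖(α k : ℂ) * (u - u') + (β k : ℂ) * (v - v')‖
            ≤ ‖(α k : ℂ) * (u - u')‖ + ‖(β k : ℂ) * (v - v')‖ :=
              norm_add_le _ _
          _ = α k * ‖u - u'‖ + β k * ‖v - v'‖ := by
              rw [norm_mul, norm_mul,
                Complex.norm_of_nonneg (hα k), Complex.norm_of_nonneg (hβ k)]

set_option maxHeartbeats 1000000 in
theorem stmt_3 (z : ℂ) (hz : 0 < z.im) (N : ℕ) (hN : 1 ≤ N)
    (α β : Fin N → ℝ) (hα : ∀ k, 1 ≤ α k) (hβ : ∀ k, 1 ≤ β k)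
    (u v u' v' : ℂ) (hu : 0 < u.im) (hv : 0 < v.im) (hu' : 0 < u'.im) (hv' : 0 < v'.im)
    (hequ : u = -(1 / N) * ∑ k, (α k : ℂ) / (z + α k * u + β k * v))
    (heqv : v = -(1 / N) * ∑ k, (β k : ℂ) / (z + α k * u + β k * v))
    (hequ' : u' = -(1 / N) * ∑ k, (α k : ℂ) / (z + α k * u' + β k * v'))
    (heqv' : v' = -(1 / N) * ∑ k, (β k : ℂ) / (z + α k * u' + β k * v')) :
    u = u' ∧ v = v' := by
  have hα0 : ∀ k, 0 < α k := fun k => lt_of_lt_of_le one_pos (hα k)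
  have hβ0 : ∀ k, 0 < β k := fun k => lt_of_lt_of_le one_pos (hβ k)
  set d : Fin N → ℂ := fun k => z + α k * u + β k * v with hd
  set d' : Fin N → ℂ := fun k => z + α k * u' + β k * v' with hd'
  have hdne : ∀ k, d k ≠ 0 := by
    intro k h0
    have him : (d k).im = z.im + α k * u.im + β k * v.im := by simp [hd]
    rw [h0] at him
    simp only [Complex.zero_im] at him
    nlinarith [mul_pos (hα0 k) hu, mul_pos (hβ0 k) hv]
  have hd'ne : ∀ k, d' k ≠ 0 := by
    intro k h0
    have him : (d' k).im = z.im + α k * u'.im + β k * v'.im := by simp [hd']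
    rw [h0] at him
    simp only [Complex.zero_im] at him
    nlinarith [mul_pos (hα0 k) hu', mul_pos (hβ0 k) hv']
  have hDpos : ∀ k, 0 < ‖d k‖ := fun k => norm_pos_iff.mpr (hdne k)
  have hD'pos : ∀ k, 0 < ‖d' k‖ := fun k => norm_pos_iff.mpr (hd'ne k)
  -- the four key sums
  set SA := (1 / N : ℝ) * ∑ k, α k * (α k * u.im + β k * v.im) / (‖d k‖) ^ 2
    with hSA
  set SB := (1 / N : ℝ) * ∑ k, β k * (α k * u.im + β k * v.im) / (‖d k‖) ^ 2
    with hSB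
  set SA' := (1 / N : ℝ) * ∑ k, α k * (α k * u'.im + β k * v'.im) / (‖d' k‖) ^ 2
    with hSA'
  set SB' := (1 / N : ℝ) * ∑ k, β k * (α k * u'.im + β k * v'.im) / (‖d' k‖) ^ 2
    with hSB'
  have habs_ns : ∀ k, (‖d k‖) ^ 2 = Complex.normSq (d k) := fun k =>
    Complex.sq_norm _
  have habs_ns' : ∀ k, (‖d' k‖) ^ 2 = Complex.normSq (d' k) := fun k =>
    Complex.sq_norm _
  have hSAlt : SA < u.im := by
    have h := aux_im z hz N hN α β α hα0 hβ0 hα0 u v u hu hv hequ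
    have e : SA = (1 / N : ℝ) * ∑ k, α k * (α k * u.im + β k * v.im)
        / Complex.normSq (z + α k * u + β k * v) := by
      rw [hSA]; congr 1
      exact Finset.sum_congr rfl fun k _ => by rw [habs_ns k]
    rw [e]; exact h
  have hSBlt : SB < v.im := by
    have h := aux_im z hz N hN α β β hα0 hβ0 hβ0 u v v hu hv heqv
    have e : SB = (1 / N : ℝ) * ∑ k, β k * (α k * u.im + β k * v.im)
        / Complex.normSq (z + α k * u + β k * v) := by
      rw [hSB]; congr 1
      exact Finset.sum_congr rfl fun k _ => by rw [habs_ns k]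
    rw [e]; exact h
  have hSA'lt : SA' < u'.im := by
    have h := aux_im z hz N hN α β α hα0 hβ0 hα0 u' v' u' hu' hv' hequ'
    have e : SA' = (1 / N : ℝ) * ∑ k, α k * (α k * u'.im + β k * v'.im)
        / Complex.normSq (z + α k * u' + β k * v') := by
      rw [hSA']; congr 1
      exact Finset.sum_congr rfl fun k _ => by rw [habs_ns' k]
    rw [e]; exact h
  have hSB'lt : SB' < v'.im := by
    have h := aux_im z hz N hN α β β hα0 hβ0 hβ0 u' v' v' hu' hv' heqv'
    have e : SB' = (1 / N : ℝ) * ∑ k, β k * (α k * u'.im + β k * v'.im)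
        / Complex.normSq (z + α k * u' + β k * v') := by
      rw [hSB']; congr 1
      exact Finset.sum_congr rfl fun k _ => by rw [habs_ns' k]
    rw [e]; exact h
  have hterm : ∀ (γ : Fin N → ℝ), (∀ k, 0 < γ k) → ∀ (x y : ℝ) (D : Fin N → ℝ),
      0 ≤ x → 0 ≤ y → (∀ k, 0 < D k) →
      (0:ℝ) ≤ (1 / N : ℝ) * ∑ k, γ k * (α k * x + β k * y) / (D k) ^ 2 := by
    intro γ hγ x y D hx hy hD
    apply mul_nonneg (by positivity)
    apply Finset.sum_nonneg
    intro k _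
    exact div_nonneg (mul_nonneg (hγ k).le (add_nonneg (mul_nonneg (hα0 k).le hx)
      (mul_nonneg (hβ0 k).le hy))) (by positivity)
  have hSAnn : 0 ≤ SA := hterm α hα0 u.im v.im _ hu.le hv.le hDpos
  have hSBnn : 0 ≤ SB := hterm β hβ0 u.im v.im _ hu.le hv.le hDpos
  have hSA'nn : 0 ≤ SA' := hterm α hα0 u'.im v'.im _ hu'.le hv'.le hD'pos
  have hSB'nn : 0 ≤ SB' := hterm β hβ0 u'.im v'.im _ hu'.le hv'.le hD'pos
  -- differences
  set a := ‖u - u'‖ with ha_def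
  set b := ‖v - v'‖ with hb_def
  set sp := Real.sqrt (u.im * u'.im) with hsp
  set sq := Real.sqrt (v.im * v'.im) with hsq
  have hsp0 : 0 < sp := Real.sqrt_pos.2 (by positivity)
  have hsq0 : 0 < sq := Real.sqrt_pos.2 (by positivity)
  set r := max (a / sp) (b / sq) with hr
  have hr0 : 0 ≤ r :=
    le_trans (div_nonneg (norm_nonneg _) hsp0.le) (le_max_left _ _)
  have ha_le : a ≤ r * sp := (div_le_iff₀ hsp0).1 (le_max_left _ _)
  have hb_le : b ≤ r * sq := (div_le_iff₀ hsq0).1 (le_max_right _ _)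
  have hdiffu := aux_diff z N α β α u v u' v' u u' hdne hd'ne hequ hequ'
  have hdiffv := aux_diff z N α β β u v u' v' v v' hdne hd'ne heqv heqv'
  have habs_u := aux_abs N α β α (fun k => (hα0 k).le) (fun k => (hβ0 k).le)
    (fun k => (hα0 k).le) u v u' v' u u' d d' hdiffu
  have habs_v := aux_abs N α β β (fun k => (hα0 k).le) (fun k => (hβ0 k).le)
    (fun k => (hβ0 k).le) u v u' v' v v' d d' hdiffv
  have chainA := aux_chain N α β α hα0 hβ0 hα0 (fun k => ‖d k‖)
    (fun k => ‖d' k‖) hDpos hD'pos a b u.im v.im u'.im v'.im r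
    hu hv hu' hv' hr0 ha_le hb_le
  have chainB := aux_chain N α β β hα0 hβ0 hβ0 (fun k => ‖d k‖)
    (fun k => ‖d' k‖) hDpos hD'pos a b u.im v.im u'.im v'.im r
    hu hv hu' hv' hr0 ha_le hb_le
  have hA2 : a ≤ r * Real.sqrt (SA * SA') := habs_u.trans chainA
  have hB2 : b ≤ r * Real.sqrt (SB * SB') := habs_v.trans chainB
  have hsqltA : Real.sqrt (SA * SA') < sp := by
    rw [hsp]
    exact Real.sqrt_lt_sqrt (mul_nonneg hSAnn hSA'nn)
      (mul_lt_mul'' hSAlt hSA'lt hSAnn hSA'nn)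
  have hsqltB : Real.sqrt (SB * SB') < sq := by
    rw [hsq]
    exact Real.sqrt_lt_sqrt (mul_nonneg hSBnn hSB'nn)
      (mul_lt_mul'' hSBlt hSB'lt hSBnn hSB'nn)
  have hr_le : r ≤ 0 := by
    by_contra hpos
    push_neg at hpos
    have hA3 : a / sp < r := by
      rw [div_lt_iff₀ hsp0]
      exact lt_of_le_of_lt hA2 (mul_lt_mul_of_pos_left hsqltA hpos)
    have hB3 : b / sq < r := by
      rw [div_lt_iff₀ hsq0]
      exact lt_of_le_of_lt hB2 (mul_lt_mul_of_pos_left hsqltB hpos)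
    exact absurd (max_lt hA3 hB3) (lt_irrefl r)
  have haz : a = 0 := by
    have h1 : a / sp ≤ 0 := le_trans (le_max_left _ _) hr_le
    have h2 : a ≤ 0 := by
      have := (div_le_iff₀ hsp0).1 h1
      simpa using this
    exact le_antisymm h2 (norm_nonneg _)
  have hbz : b = 0 := by
    have h1 : b / sq ≤ 0 := le_trans (le_max_right _ _) hr_le
    have h2 : b ≤ 0 := by
      have := (div_le_iff₀ hsq0).1 h1
      simpa using this
    exact le_antisymm h2 (norm_nonneg _)
  constructor
  · exact sub_eq_zero.1 (norm_eq_zero.1 haz)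
  · exact sub_eq_zero.1 (norm_eq_zero.1 hbz)
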